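/- Let $X$ and $Y$ be metric spaces with all distances between distinct points in $[1/2,1]$, and suppose both satisfy all one-point extension properties: for every $\epsilon > 0$, every finite tuple in the space approximately realizing a finite configuration from the class $\mathcal C$ can be extended to approximately realize any one-point extension of that configuration, with error $\epsilon$. Then for every $n \in \mathbb N$ and $\epsilon > 0$, player II has a winning strategy in the $n$-round Ehrenfeucht–Fraïssé game $\mathfrak G(X,Y,n,\epsilon)$, where player II wins if the chosen points satisfy $|d_X(a_i,a_j) - d_Y(b_i,b_j)| < \epsilon$ for all $i < j$. -/

import Mathlib

/-- A configuration from the class `𝒞`: a finite metric space on `m` points with all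
distances between distinct points in `[1/2,1]`. -/
def IsCConfig (m : ℕ) (dX : Fin m → Fin m → ℝ) : Prop :=
  (∀ i j, dX i j = dX j i) ∧ (∀ i, dX i i = 0) ∧
    ∀ i j, i ≠ j → dX i j ∈ Set.Icc (1/2 : ℝ) 1

/-- The one-point extension property of a metric space `Z` (with error doubling):
for every configuration `X₀` from `𝒞`, every one-point extension `Y₀ = X₀ ∪ {y}` in `𝒞`
(given by the distances `dy i` from the new point), every `ε > 0`, and every tuple in `Z`
realizing `X₀` up to error `ε`, some point of `Z` extends it to a realization of `Y₀`
up to error `2ε`. -/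
def ExtensionProperty (Z : Type*) [MetricSpace Z] : Prop :=
  ∀ (m : ℕ) (dX : Fin m → Fin m → ℝ) (dy : Fin m → ℝ),
    IsCConfig m dX → (∀ i, dy i ∈ Set.Icc (1/2 : ℝ) 1) →
    ∀ ε : ℝ, 0 < ε → ∀ z : Fin m → Z,
      (∀ i j, i ≠ j → |dist (z i) (z j) - dX i j| < ε) →
      ∃ w : Z, (∀ i, |dist (z i) w - dy i| < 2 * ε) ∧
        (∀ i j, i ≠ j → |dist (z i) (z j) - dX i j| < 2 * ε)

/-- The set of histories (lists of pairs, most recent first) reachable in `n` rounds of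
the Ehrenfeucht–Fraïssé game when player II plays according to the strategy
`(σX, σY)`: in each round player I picks a point of `X` (answered by `σX`) or a point
of `Y` (answered by `σY`). -/
def efPlays {X Y : Type*} (σX : List (X × Y) → X → Y) (σY : List (X × Y) → Y → X) :
    ℕ → Set (List (X × Y))
  | 0 => {[]}
  | n + 1 => {h' | ∃ h ∈ efPlays σX σY n,
      (∃ a : X, h' = (a, σX h a) :: h) ∨ (∃ b : Y, h' = (σY h b, b) :: h)}

/-- Player II has a winning strategy in the `n`-round game `𝔊(X,Y,n,ε)`: a strategy all
of whose complete plays produce tuples with `|d_X(a_i,a_j) - d_Y(b_i,b_j)| < ε`. -/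
def IIWins (X Y : Type*) [MetricSpace X] [MetricSpace Y] (n : ℕ) (ε : ℝ) : Prop :=
  ∃ (σX : List (X × Y) → X → Y) (σY : List (X × Y) → Y → X),
    ∀ h ∈ efPlays σX σY n, ∀ p ∈ h, ∀ q ∈ h,
      |dist p.1 q.1 - dist p.2 q.2| < ε

open scoped Classical

noncomputable def reps {X Y : Type*} : List (X × Y) → List (X × Y)
  | [] => []
  | p :: t => if ∃ q ∈ t, q.1 = p.1 then reps t else p :: reps t

lemma reps_subset {X Y : Type*} : ∀ (l : List (X × Y)), ∀ q ∈ reps l, q ∈ l := by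
  intro l
  induction l with
  | nil => simp [reps]
  | cons p t ih =>
    intro q hq
    rw [reps] at hq
    split_ifs at hq with hcond
    · exact List.mem_cons_of_mem _ (ih q hq)
    · rcases List.mem_cons.mp hq with rfl | hq
      · exact List.mem_cons_self
      · exact List.mem_cons_of_mem _ (ih q hq)

lemma reps_cover {X Y : Type*} : ∀ (l : List (X × Y)), ∀ p ∈ l, ∃ q ∈ reps l, q.1 = p.1 := by
  intro l
  induction l with
  | nil => simp
  | cons p t ih =>
    intro x hx
    rw [reps]
    split_ifs with hcond
    · rcases List.mem_cons.mp hx with rfl | hx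
      · obtain ⟨q, hq, hq1⟩ := hcond
        obtain ⟨q', hq', hq1'⟩ := ih q hq
        exact ⟨q', hq', hq1'.trans hq1⟩
      · exact ih x hx
    · rcases List.mem_cons.mp hx with rfl | hx
      · exact ⟨x, List.mem_cons_self, rfl⟩
      · obtain ⟨q', hq', h1⟩ := ih x hx
        exact ⟨q', List.mem_cons_of_mem _ hq', h1⟩

lemma reps_pairwise {X Y : Type*} :
    ∀ (l : List (X × Y)), (reps l).Pairwise (fun p q => p.1 ≠ q.1) := by
  intro l
  induction l with
  | nil => simp [reps]
  | cons p t ih =>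
    rw [reps]
    split_ifs with hcond
    · exact ih
    · refine List.Pairwise.cons ?_ ih
      intro q hq heq
      exact hcond ⟨q, reps_subset t q hq, heq.symm⟩

def okp {X Y : Type*} [MetricSpace X] [MetricSpace Y] (δ : ℝ) (h : List (X × Y)) : Prop :=
  ∀ p ∈ h, ∀ q ∈ h, |dist p.1 q.1 - dist p.2 q.2| < δ

lemma okp_swap {X Y : Type*} [MetricSpace X] [MetricSpace Y] (δ : ℝ) (h : List (X × Y)) :
    okp δ (h.map Prod.swap) ↔ okp δ h := by
  constructor
  · intro H p hp q hq
    have := H p.swap (List.mem_map_of_mem (f := Prod.swap) hp) q.swap (List.mem_map_of_mem (f := Prod.swap) hq)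
    simpa [abs_sub_comm] using this
  · intro H p hp q hq
    simp only [List.mem_map] at hp hq
    obtain ⟨p', hp', rfl⟩ := hp
    obtain ⟨q', hq', rfl⟩ := hq
    have := H p' hp' q' hq'
    simpa [abs_sub_comm] using this

lemma okp_step {X Y : Type*} [MetricSpace X] [MetricSpace Y]
    (hX : ∀ x x' : X, x ≠ x' → dist x x' ∈ Set.Icc (1/2 : ℝ) 1)
    (hYext : ExtensionProperty Y)
    {δ : ℝ} (hδ : 0 < δ) (h : List (X × Y)) (hok : okp δ h) (a : X) :
    ∃ b : Y, okp (3 * δ) ((a, b) :: h) := by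
  by_cases hrep : ∃ p ∈ h, p.1 = a
  · obtain ⟨p₀, hp₀, hp₀a⟩ := hrep
    refine ⟨p₀.2, ?_⟩
    have key : ∀ q ∈ h, |dist a q.1 - dist p₀.2 q.2| < δ := by
      intro q hq
      have := hok p₀ hp₀ q hq
      rwa [hp₀a] at this
    intro p hp q hq
    rcases List.mem_cons.mp hp with rfl | hp <;> rcases List.mem_cons.mp hq with rfl | hq
    · simp only [dist_self, sub_zero, abs_zero]
      linarith
    · exact (key q hq).trans_le (by linarith)
    · have := key p hp
      rw [dist_comm a p.1, dist_comm p₀.2 p.2, abs_sub_comm] at this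
      rw [abs_sub_comm] at this
      exact this.trans_le (by linarith)
    · exact (hok p hp q hq).trans_le (by linarith)
  · push_neg at hrep
    set r := reps h with hr
    have hpw := List.pairwise_iff_get.mp (reps_pairwise h)
    have hne : ∀ i j : Fin r.length, i ≠ j → (r.get i).1 ≠ (r.get j).1 := by
      intro i j hij
      rcases lt_or_gt_of_ne hij with hlt | hgt
      · exact hpw i j hlt
      · exact (hpw j i hgt).symm
    have hmem : ∀ i : Fin r.length, r.get i ∈ h := fun i =>
      reps_subset h _ (List.get_mem r i)
    obtain ⟨w, hw, -⟩ := hYext r.length (fun i j => dist (r.get i).1 (r.get j).1)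
      (fun i => dist (r.get i).1 a)
      ⟨fun i j => dist_comm _ _, fun i => dist_self _, fun i j hij => hX _ _ (hne i j hij)⟩
      (fun i => hX _ _ (hrep _ (hmem i)))
      δ hδ (fun i => (r.get i).2)
      (by
        intro i j hij
        have := hok _ (hmem i) _ (hmem j)
        rw [abs_sub_comm] at this
        exact this)
    refine ⟨w, ?_⟩
    have key : ∀ p ∈ h, |dist a p.1 - dist w p.2| < 3 * δ := by
      intro p hp
      obtain ⟨q₀, hq₀r, hq₀⟩ := reps_cover h p hp
      obtain ⟨i, hi⟩ := List.mem_iff_get.mp hq₀r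
      have hi' : r[(i : ℕ)] = q₀ := hi
      have h1 : |dist q₀.2 w - dist q₀.1 a| < 2 * δ := by simpa [hi'] using hw i
      have h2 : dist q₀.2 p.2 < δ := by
        have := hok q₀ (reps_subset h _ hq₀r) p hp
        rw [hq₀, dist_self, zero_sub, abs_neg, abs_dist] at this
        exact this
      have h3 : |dist q₀.2 w - dist p.2 w| ≤ dist q₀.2 p.2 := abs_dist_sub_le _ _ _
      rw [show dist a p.1 = dist q₀.1 a by rw [← hq₀, dist_comm], dist_comm w p.2]
      rw [abs_sub_lt_iff] at h1 ⊢
      have h3' := abs_le.mp h3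
      constructor <;> [skip; skip] <;> cases h3' <;> linarith [h1.1, h1.2]
    intro p hp q hq
    rcases List.mem_cons.mp hp with rfl | hp <;> rcases List.mem_cons.mp hq with rfl | hq
    · simp only [dist_self, sub_zero, abs_zero]
      linarith
    · exact key q hq
    · have := key p hp
      rw [dist_comm a p.1, dist_comm w p.2, abs_sub_comm] at this
      rw [abs_sub_comm] at this
      exact this
    · exact (hok p hp q hq).trans_le (by linarith)

noncomputable def stratX {X Y : Type*} [MetricSpace X] [MetricSpace Y] [Nonempty Y]
    (hX : ∀ x x' : X, x ≠ x' → dist x x' ∈ Set.Icc (1/2 : ℝ) 1)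
    (hYext : ExtensionProperty Y) (c : ℝ) (h : List (X × Y)) (a : X) : Y :=
  if hh : 0 < c ∧ okp c h then (okp_step hX hYext hh.1 h hh.2 a).choose
  else Classical.arbitrary Y

lemma stratX_spec {X Y : Type*} [MetricSpace X] [MetricSpace Y] [Nonempty Y]
    (hX : ∀ x x' : X, x ≠ x' → dist x x' ∈ Set.Icc (1/2 : ℝ) 1)
    (hYext : ExtensionProperty Y) {c : ℝ} {h : List (X × Y)}
    (hc : 0 < c) (hok : okp c h) (a : X) :
    okp (3 * c) ((a, stratX hX hYext c h a) :: h) := by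
  rw [stratX, dif_pos ⟨hc, hok⟩]
  exact (okp_step hX hYext hc h hok a).choose_spec

noncomputable def stratY {X Y : Type*} [MetricSpace X] [MetricSpace Y] [Nonempty X]
    (hY : ∀ y y' : Y, y ≠ y' → dist y y' ∈ Set.Icc (1/2 : ℝ) 1)
    (hXext : ExtensionProperty X) (c : ℝ) (h : List (X × Y)) (b : Y) : X :=
  stratX hY hXext c (h.map Prod.swap) b

lemma stratY_spec {X Y : Type*} [MetricSpace X] [MetricSpace Y] [Nonempty X]
    (hY : ∀ y y' : Y, y ≠ y' → dist y y' ∈ Set.Icc (1/2 : ℝ) 1)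
    (hXext : ExtensionProperty X) {c : ℝ} {h : List (X × Y)}
    (hc : 0 < c) (hok : okp c h) (b : Y) :
    okp (3 * c) ((stratY hY hXext c h b, b) :: h) := by
  have h1 : okp c (h.map Prod.swap) := (okp_swap c h).mpr hok
  have h2 := stratX_spec hY hXext hc h1 b
  have h3 : ((stratY hY hXext c h b, b) :: h).map Prod.swap
      = (b, stratX hY hXext c (h.map Prod.swap) b) :: h.map Prod.swap := rfl
  exact (okp_swap (3 * c) _).mp (by rw [h3]; exact h2)
lemma efPlays_length {X Y : Type*} (σX : List (X × Y) → X → Y) (σY : List (X × Y) → Y → X) :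
    ∀ k, ∀ h ∈ efPlays σX σY k, h.length = k := by
  intro k
  induction k with
  | zero => intro h hh; simp only [efPlays, Set.mem_singleton_iff] at hh; simp [hh]
  | succ k ih =>
    intro h' hh'
    obtain ⟨h, hh, hcase⟩ := hh'
    rcases hcase with ⟨a, rfl⟩ | ⟨b, rfl⟩ <;> simp [ih h hh]

lemma main_aux {X Y : Type*} [MetricSpace X] [MetricSpace Y] [Nonempty X] [Nonempty Y]
    (hX : ∀ x x' : X, x ≠ x' → dist x x' ∈ Set.Icc (1/2 : ℝ) 1)
    (hY : ∀ y y' : Y, y ≠ y' → dist y y' ∈ Set.Icc (1/2 : ℝ) 1)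
    (hXext : ExtensionProperty X) (hYext : ExtensionProperty Y)
    (c : ℕ → ℝ) (hc : ∀ k, 0 < c k) (hc3 : ∀ k, c (k + 1) = 3 * c k) :
    ∀ k, ∀ h ∈ efPlays (fun h a => stratX hX hYext (c h.length) h a)
      (fun h b => stratY hY hXext (c h.length) h b) k, okp (c k) h := by
  intro k
  induction k with
  | zero =>
    intro h hh
    simp only [efPlays, Set.mem_singleton_iff] at hh
    subst hh
    intro p hp
    simp at hp
  | succ k ih =>
    intro h' hh'
    obtain ⟨h, hh, hcase⟩ := hh'
    have hlenk : h.length = k := efPlays_length _ _ k h hh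
    have hokh' : okp (c h.length) h := by rw [hlenk]; exact ih h hh
    have hck1 : c (k + 1) = 3 * c h.length := by rw [hlenk]; exact hc3 k
    rcases hcase with ⟨a, rfl⟩ | ⟨b, rfl⟩
    · rw [hck1]
      exact stratX_spec hX hYext (hc h.length) hokh' a
    · rw [hck1]
      exact stratY_spec hY hXext (hc h.length) hokh' b


theorem stmt11 (X Y : Type*) [MetricSpace X] [MetricSpace Y]
    (hX : ∀ x x' : X, x ≠ x' → dist x x' ∈ Set.Icc (1/2 : ℝ) 1)
    (hY : ∀ y y' : Y, y ≠ y' → dist y y' ∈ Set.Icc (1/2 : ℝ) 1)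
    (hXext : ExtensionProperty X) (hYext : ExtensionProperty Y) :
    ∀ (n : ℕ) (ε : ℝ), 0 < ε → IIWins X Y n ε := by
  intro n ε hε
  haveI hNY : Nonempty Y := by
    obtain ⟨w, -, -⟩ := hYext 0 (fun i _ => i.elim0) (fun i => i.elim0)
      ⟨fun i => i.elim0, fun i => i.elim0, fun i => i.elim0⟩ (fun i => i.elim0)
      1 one_pos Fin.elim0 (fun i => i.elim0)
    exact ⟨w⟩
  haveI hNX : Nonempty X := by
    obtain ⟨w, -, -⟩ := hXext 0 (fun i _ => i.elim0) (fun i => i.elim0)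
      ⟨fun i => i.elim0, fun i => i.elim0, fun i => i.elim0⟩ (fun i => i.elim0)
      1 one_pos Fin.elim0 (fun i => i.elim0)
    exact ⟨w⟩
  have h3pos : (0 : ℝ) < 3 ^ n := by positivity
  set c : ℕ → ℝ := fun k => 3 ^ k * (ε / 3 ^ n) with hcdef
  have hc : ∀ k, 0 < c k := fun k => mul_pos (by positivity) (div_pos hε h3pos)
  have hc3 : ∀ k, c (k + 1) = 3 * c k := by
    intro k
    simp only [hcdef, pow_succ]
    ring
  refine ⟨fun h a => stratX hX hYext (c h.length) h a,
    fun h b => stratY hY hXext (c h.length) h b, ?_⟩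
  intro h hh
  have hinv := main_aux hX hY hXext hYext c hc hc3 n h hh
  have hcn : c n = ε := by
    simp only [hcdef]
    field_simp
  rw [hcn] at hinv
  exact hinv
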